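/- arXiv:0812.4158 — 5 statements merged into one kernel-verified Lean document; each statement's English description precedes it below -/
import Mathlib

section
/- Let p be an odd prime and let Γ₁ = (V₁,E₁) and Γ₂ = (V₂,E₂) be undirected loopless finite graphs. Then the graph-algebras R(Γ₁) and R(Γ₂) are isomorphic as (ℤ/p³ℤ)-algebras if and only if the graphs Γ₁ and Γ₂ are isomorphic. -/
noncomputable section

open MvPolynomial

/-- Pairs `e = (i,j)` with `i < j`, indexing the variables `a_e`. -/
abbrev EPair (n : ℕ) := {e : Fin n × Fin n // e.1 < e.2}

/-- Variables of the polynomial algebra: the `vᵢ` and the `a_e`. -/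
abbrev GVar (n : ℕ) := Fin n ⊕ EPair n

/-- The commutative polynomial algebra `(ℤ/p³ℤ)[v₁,…,vₙ,a₁,…,a_l]`. -/
abbrev GPoly (p n : ℕ) := MvPolynomial (GVar n) (ZMod (p ^ 3))

/-- The generators of the ideal `I` of relations of the graph-algebra `R(Γ)`:
`vᵢ² = 0`; `vᵢ·vⱼ = vⱼ·vᵢ = a_e` for `e = (i,j)`, `i < j`; `a_e·vᵢ = vᵢ·a_e = 0`;
`a_e·a_f = 0`; `p·a_e = 0` if `e ∈ E` and `p²·a_e = 0` if `e ∉ E`. -/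
def graphRels (p : ℕ) {n : ℕ} (G : SimpleGraph (Fin n)) : Set (GPoly p n) :=
  {r | (∃ i : Fin n, r = X (Sum.inl i) ^ 2) ∨
       (∃ e : EPair n, r = X (Sum.inl e.1.1) * X (Sum.inl e.1.2) - X (Sum.inr e)) ∨
       (∃ e : EPair n, r = X (Sum.inl e.1.2) * X (Sum.inl e.1.1) - X (Sum.inr e)) ∨
       (∃ (e : EPair n) (i : Fin n), r = X (Sum.inr e) * X (Sum.inl i)) ∨
       (∃ e f : EPair n, r = X (Sum.inr e) * X (Sum.inr f)) ∨
       (∃ e : EPair n, G.Adj e.1.1 e.1.2 ∧ r = (p : GPoly p n) * X (Sum.inr e)) ∨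
       (∃ e : EPair n, ¬G.Adj e.1.1 e.1.2 ∧ r = (p : GPoly p n) ^ 2 * X (Sum.inr e))}

/-- The graph-algebra `R(Γ) = (ℤ/p³ℤ)[v₁,…,vₙ,a₁,…,a_l]/I`. -/
abbrev GraphAlg (p : ℕ) {n : ℕ} (G : SimpleGraph (Fin n)) :=
  GPoly p n ⧸ Ideal.span (graphRels p G)

/-- The image of the variable `vᵢ` in `R(Γ)`. -/
def GraphAlg.v (p : ℕ) {n : ℕ} (G : SimpleGraph (Fin n)) (i : Fin n) : GraphAlg p G :=
  Ideal.Quotient.mk _ (X (Sum.inl i))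

/-- The image of the variable `a_e` in `R(Γ)`. -/
def GraphAlg.a (p : ℕ) {n : ℕ} (G : SimpleGraph (Fin n)) (e : EPair n) : GraphAlg p G :=
  Ideal.Quotient.mk _ (X (Sum.inr e))



/-!
A graph isomorphism renames the generators and preserves the relations. Conversely, `R(Γ)` is
generated by the `vᵢ`, so ring maps out of it are determined on the `vᵢ`. Sending `vⱼ ↦ ε` in
`(ℤ/p)[ε]` reads off the coefficient of `vⱼ` mod `p`; sending `vₖ, vₗ ↦ ε₁, ε₂` in
`(ℤ/q)[ε₁][ε₂]` reads off the coefficient of `a_{kl}` mod `q`, and `q = p²` is allowed exactly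
when `kl` is not an edge. For a ring isomorphism `φ : R(Γ₁) ≃ R(Γ₂)`, let `W i j` be the
coefficient of `vⱼ` in `φ vᵢ` mod `p`. Surjectivity of `φ` gives a nonzero entry in every column
of `W`, and `(φ vᵢ)² = 0` with `p` odd leaves at most one in every row, so choosing one per column
is an injection `σ : V₂ → V₁`. If `σ j ~ σ l` then `p · φ(v_{σj}) φ(v_{σl}) = 0`, and reading the
coefficient of `a_{jl}` mod `p²` shows `j ~ l`. Doing the same for `φ⁻¹` and counting edges
makes `σ` an isomorphism.
-/

open DualNumber TrivSqZeroExt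

namespace GraphAlg

section Relations

variable {p n : ℕ} {G : SimpleGraph (Fin n)}

lemma mk_eq_zero_of_mem_graphRels {r : GPoly p n} (hr : r ∈ graphRels p G) :
    Ideal.Quotient.mk (Ideal.span (graphRels p G)) r = 0 :=
  Ideal.Quotient.eq_zero_iff_mem.mpr (Ideal.subset_span hr)

@[simp] lemma v_mul_self (i : Fin n) : v p G i * v p G i = 0 := by
  simpa [v, sq] using mk_eq_zero_of_mem_graphRels (G := G) (Or.inl ⟨i, rfl⟩)

lemma v_mul_v (e : EPair n) : v p G e.1.1 * v p G e.1.2 = a p G e := by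
  simpa [v, a, sub_eq_zero] using
    mk_eq_zero_of_mem_graphRels (G := G) (Or.inr (Or.inl ⟨e, rfl⟩))

lemma a_mul_v (e : EPair n) (i : Fin n) : a p G e * v p G i = 0 := by
  simpa [v, a] using
    mk_eq_zero_of_mem_graphRels (G := G) (Or.inr (Or.inr (Or.inr (Or.inl ⟨e, i, rfl⟩))))

lemma natCast_mul_a_of_adj {e : EPair n} (he : G.Adj e.1.1 e.1.2) :
    (p : GraphAlg p G) * a p G e = 0 := by
  simpa [v, a] using mk_eq_zero_of_mem_graphRels
    (Or.inr (Or.inr (Or.inr (Or.inr (Or.inr (Or.inl ⟨e, he, rfl⟩))))))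

lemma natCast_sq_mul_a_of_not_adj {e : EPair n} (he : ¬ G.Adj e.1.1 e.1.2) :
    (p : GraphAlg p G) ^ 2 * a p G e = 0 := by
  simpa [v, a] using mk_eq_zero_of_mem_graphRels
    (Or.inr (Or.inr (Or.inr (Or.inr (Or.inr (Or.inr ⟨e, he, rfl⟩))))))

lemma exists_v_mul_v {i j : Fin n} (hij : i ≠ j) :
    ∃ e : EPair n, v p G i * v p G j = a p G e ∧ s(i, j) = s(e.1.1, e.1.2) := by
  rcases hij.lt_or_gt with h | h
  · exact ⟨⟨(i, j), h⟩, v_mul_v (p := p) (G := G) ⟨(i, j), h⟩, rfl⟩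
  · exact ⟨⟨(j, i), h⟩, by rw [mul_comm]; exact v_mul_v (p := p) (G := G) ⟨(j, i), h⟩,
      Sym2.eq_swap⟩

lemma v_mul_v_mul_v (i j k : Fin n) : v p G i * v p G j * v p G k = 0 := by
  rcases eq_or_ne i j with rfl | hij
  · simp
  · obtain ⟨e, he, -⟩ := exists_v_mul_v (p := p) (G := G) hij
    rw [he, a_mul_v]

lemma natCast_mul_v_mul_v_of_adj {i j : Fin n} (h : G.Adj i j) :
    (p : GraphAlg p G) * (v p G i * v p G j) = 0 := by
  obtain ⟨e, he, hs⟩ := exists_v_mul_v (p := p) (G := G) h.ne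
  rw [he, natCast_mul_a_of_adj]
  rwa [← SimpleGraph.mem_edgeSet, ← hs]

lemma natCast_sq_mul_v_mul_v (i j : Fin n) :
    (p : GraphAlg p G) ^ 2 * (v p G i * v p G j) = 0 := by
  by_cases hadj : G.Adj i j
  · rw [sq, mul_assoc, natCast_mul_v_mul_v_of_adj hadj, mul_zero]
  rcases eq_or_ne i j with rfl | hij
  · simp
  · obtain ⟨e, he, hs⟩ := exists_v_mul_v (p := p) (G := G) hij
    rw [he, natCast_sq_mul_a_of_not_adj]
    rwa [← SimpleGraph.mem_edgeSet, ← hs]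

end Relations

section Lift

variable {p n : ℕ} {G : SimpleGraph (Fin n)} {A : Type*} [CommRing A]

def lift (f : ZMod (p ^ 3) →+* A) (w : Fin n → A) (hsq : ∀ i, w i * w i = 0)
    (hcube : ∀ i j k, w i * w j * w k = 0)
    (hadj : ∀ i j, G.Adj i j → (p : A) * (w i * w j) = 0)
    (hnadj : ∀ i j, ¬ G.Adj i j → (p : A) ^ 2 * (w i * w j) = 0) :
    GraphAlg p G →+* A :=
  Ideal.Quotient.lift _ (eval₂Hom f (Sum.elim w fun e => w e.1.1 * w e.1.2)) <| by
    refine fun r hr => Submodule.span_induction (fun r hr => ?_) (map_zero _)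
      (fun _ _ _ _ hx hy => by rw [map_add, hx, hy, add_zero])
      (fun c _ _ hx => by rw [smul_eq_mul, map_mul, hx, mul_zero]) hr
    rcases hr with ⟨i, rfl⟩ | ⟨e, rfl⟩ | ⟨e, rfl⟩ | ⟨e, i, rfl⟩ | ⟨e, f, rfl⟩ | ⟨e, he, rfl⟩ |
      ⟨e, he, rfl⟩
    · simp [sq, hsq]
    · simp
    · simp [mul_comm]
    · simp [hcube]
    · simp [← mul_assoc, hcube]
    · simpa using hadj _ _ he
    · simpa using hnadj _ _ he

@[simp] lemma lift_v (f : ZMod (p ^ 3) →+* A) (w : Fin n → A) (hsq hcube hadj hnadj)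
    (i : Fin n) : lift (G := G) f w hsq hcube hadj hnadj (v p G i) = w i := by
  simp [lift, v]

theorem ringHom_ext {B : Type*} [Semiring B] {f g : GraphAlg p G →+* B}
    (h : ∀ i, f (v p G i) = g (v p G i)) : f = g := by
  refine Ideal.Quotient.ringHom_ext (MvPolynomial.ringHom_ext (fun r => ?_) ?_)
  · exact congrArg (· r) (RingHom.ext_zmod ((f.comp _).comp C) ((g.comp _).comp C))
  · rintro (i | e)
    · exact h i
    · change f (a p G e) = g (a p G e)
      rw [← v_mul_v, map_mul, map_mul, h, h]

end Lift

section Map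

variable {p : ℕ} {n₁ n₂ : ℕ} {Γ₁ : SimpleGraph (Fin n₁)} {Γ₂ : SimpleGraph (Fin n₂)}

def map (ι : Γ₁ →g Γ₂) : GraphAlg p Γ₁ →+* GraphAlg p Γ₂ :=
  lift (algebraMap _ _) (fun i => v p Γ₂ (ι i)) (fun _ => v_mul_self _)
    (fun _ _ _ => v_mul_v_mul_v _ _ _) (fun _ _ h => natCast_mul_v_mul_v_of_adj (ι.map_adj h))
    (fun _ _ _ => natCast_sq_mul_v_mul_v _ _)

@[simp] lemma map_v (ι : Γ₁ →g Γ₂) (i : Fin n₁) : map (p := p) ι (v p Γ₁ i) = v p Γ₂ (ι i) :=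
  lift_v ..

def algEquivOfIso (ι : Γ₁ ≃g Γ₂) : GraphAlg p Γ₁ ≃ₐ[ZMod (p ^ 3)] GraphAlg p Γ₂ :=
  AlgEquiv.ofRingEquiv (f := RingEquiv.ofRingHom (map ι.toHom) (map ι.symm.toHom)
      (ringHom_ext fun i => by simp) (ringHom_ext fun i => by simp))
    fun r => RingHom.congr_fun (RingHom.ext_zmod ((map (p := p) ι.toHom).comp (algebraMap _ _))
      (algebraMap _ _)) r

end Map

end GraphAlg

section DualNumber

variable {R S : Type*} [CommRing R] [CommRing S]

def DualNumber.map (g : R →+* S) : R[ε] →+* S[ε] where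
  toFun x := inl (g x.fst) + inr (g x.snd)
  map_one' := by ext <;> simp
  map_mul' x y := by ext <;> simp
  map_zero' := by ext <;> simp
  map_add' x y := by ext <;> simp

@[simp] lemma DualNumber.fst_map (g : R →+* S) (x : R[ε]) :
    (DualNumber.map g x).fst = g x.fst := by simp [DualNumber.map]

@[simp] lemma DualNumber.snd_map (g : R →+* S) (x : R[ε]) :
    (DualNumber.map g x).snd = g x.snd := by simp [DualNumber.map]

@[simp] lemma DualNumber.map_inl (g : R →+* S) (r : R) :
    DualNumber.map g (inl r) = inl (g r) := by ext <;> simp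

@[simp] lemma DualNumber.map_eps (g : R →+* S) : DualNumber.map g ε = ε := by ext <;> simp

end DualNumber

lemma ZMod.castHom_eq_zero_iff_natCast_mul_eq_zero {p : ℕ} [NeZero p] (z : ZMod (p ^ 2)) :
    ZMod.castHom (dvd_pow_self p two_ne_zero) (ZMod p) z = 0 ↔ (p : ZMod (p ^ 2)) * z = 0 := by
  rw [← ZMod.natCast_zmod_val z, map_natCast, ← Nat.cast_mul, ZMod.natCast_eq_zero_iff,
    ZMod.natCast_eq_zero_iff]
  simp only [sq]
  exact (Nat.mul_dvd_mul_iff_left (Nat.pos_of_neZero p)).symm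

lemma ZMod.natCast_mul_eq_zero_of_mul_self_eq_zero {p : ℕ} [Fact p.Prime] {z : ZMod (p ^ 2)}
    (hz : z * z = 0) : (p : ZMod (p ^ 2)) * z = 0 := by
  rw [← ZMod.castHom_eq_zero_iff_natCast_mul_eq_zero]
  exact mul_self_eq_zero.mp (by rw [← map_mul, hz, map_zero])

namespace GraphAlg

section Eval

variable {p n : ℕ} {G : SimpleGraph (Fin n)} {q : ℕ}

def evalEps (hq : q ∣ p ^ 3) (j : Fin n) : GraphAlg p G →+* (ZMod q)[ε] :=
  have hw : ∀ i k : Fin n,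
      (if i = j then ε else 0 : (ZMod q)[ε]) * (if k = j then ε else 0) = 0 :=
    fun i k => by split_ifs <;> simp
  lift ((inlHom _ _).comp (ZMod.castHom hq _)) (fun i => if i = j then ε else 0)
    (fun i => hw i i) (fun _ _ _ => by rw [hw, zero_mul]) (fun _ _ _ => by rw [hw, mul_zero])
    (fun _ _ _ => by rw [hw, mul_zero])

@[simp] lemma evalEps_v (hq : q ∣ p ^ 3) (j i : Fin n) :
    evalEps (G := G) hq j (v p G i) = if i = j then ε else 0 := by
  simp [evalEps]

def evalEps₂ (hq : q ∣ p ^ 2) (k l : Fin n) (hkl : G.Adj k l → q ∣ p) :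
    GraphAlg p G →+* (ZMod q)[ε][ε] :=
  GraphAlg.lift ((algebraMap (ZMod q) (ZMod q)[ε][ε]).comp
      (ZMod.castHom (hq.trans (pow_dvd_pow p (by norm_num : 2 ≤ 3))) _))
    (fun i => if i = k then inl ε else if i = l then ε else 0 : Fin n → (ZMod q)[ε][ε])
    (fun _ => by split_ifs <;> simp [← inl_mul])
    (fun _ _ _ => by split_ifs <;> ext <;> simp)
    (fun i j h => by
      have hp : G.Adj k l → (p : ZMod q) = 0 := fun hadj =>
        (ZMod.natCast_eq_zero_iff p q).mpr (hkl hadj)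
      split_ifs <;> ext <;> simp
      all_goals (subst_vars; first | exact hp h | exact hp h.symm))
    (fun _ _ _ => by
      rw [← Nat.cast_pow, ← map_natCast (algebraMap (ZMod q) (ZMod q)[ε][ε]),
        (ZMod.natCast_eq_zero_iff _ _).mpr hq, map_zero, zero_mul])

lemma fst_evalEps₂ (hq : q ∣ p ^ 2) {k l : Fin n} (hkl : G.Adj k l → q ∣ p)
    (x : GraphAlg p G) :
    (evalEps₂ hq k l hkl x).fst = evalEps (hq.trans (pow_dvd_pow p (by norm_num))) k x := by
  refine RingHom.congr_fun (ringHom_ext (f := (fstHom (ZMod q) _ _).toRingHom.comp _) ?_) x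
  intro i
  simp only [evalEps₂, lift_v, RingHom.coe_comp, Function.comp_apply, evalEps_v]
  split_ifs <;> simp_all

lemma fst_snd_evalEps₂ (hq : q ∣ p ^ 2) {k l : Fin n} (hkl : G.Adj k l → q ∣ p) (hne : k ≠ l)
    (x : GraphAlg p G) :
    (evalEps₂ hq k l hkl x).snd.fst =
      (evalEps (hq.trans (pow_dvd_pow p (by norm_num))) l x).snd := by
  have := RingHom.congr_fun (ringHom_ext
    (f := (DualNumber.map (fstHom (ZMod q) _ _).toRingHom).comp (evalEps₂ hq k l hkl))
    (g := evalEps (hq.trans (pow_dvd_pow p (by norm_num))) l) fun i => ?_) x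
  · simpa using congrArg TrivSqZeroExt.snd this
  simp only [evalEps₂, lift_v, RingHom.coe_comp, Function.comp_apply, evalEps_v]
  split_ifs <;> simp_all

lemma castHom_snd_evalEps {m : ℕ} (hq : q ∣ p ^ 3) (hm : m ∣ q) (j : Fin n)
    (x : GraphAlg p G) :
    ZMod.castHom hm (ZMod m) (evalEps hq j x).snd = (evalEps (hm.trans hq) j x).snd := by
  have := RingHom.congr_fun (ringHom_ext
    (f := (DualNumber.map (ZMod.castHom hm (ZMod m))).comp (evalEps hq j))
    (g := evalEps (hm.trans hq) j) fun i => ?_) x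
  · simpa using congrArg TrivSqZeroExt.snd this
  by_cases h : i = j <;> simp [h]

lemma fst_evalEps_mul_self {x : GraphAlg p G} (hx : x * x = 0) (hq : q ∣ p ^ 3) (j : Fin n) :
    (evalEps hq j x).fst * (evalEps hq j x).fst = 0 := by
  simpa using congrArg TrivSqZeroExt.fst (congrArg (evalEps hq j) hx)

lemma snd_eq_zero_of_forall_snd_v_eq_zero {R : Type*} [CommRing R] (ψ : GraphAlg p G →+* R[ε])
    (h : ∀ i, (ψ (v p G i)).snd = 0) (x : GraphAlg p G) : (ψ x).snd = 0 := by
  have hψ : ψ = (inlHom R R).comp ((fstHom R R R).toRingHom.comp ψ) :=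
    ringHom_ext fun i => by ext <;> simp [h]
  rw [hψ]
  simp

end Eval

section Coeff

variable {p n : ℕ} {G : SimpleGraph (Fin n)}

def coeffV (j : Fin n) (x : GraphAlg p G) : ZMod p :=
  (evalEps (dvd_pow_self p three_ne_zero) j x).snd

variable [Fact p.Prime]

theorem coeffV_mul_coeffV_eq_zero (hp : p ≠ 2) {x : GraphAlg p G} (hx : x * x = 0)
    {k l : Fin n} (hkl : k ≠ l) : coeffV k x * coeffV l x = 0 := by
  have h0 := mul_self_eq_zero.mp (fst_evalEps_mul_self hx (dvd_pow_self p three_ne_zero) k)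
  have h := congrArg (fun y => y.snd.snd)
    (congrArg (evalEps₂ (dvd_pow_self p two_ne_zero) k l fun _ => dvd_rfl) hx)
  simp only [map_mul, map_zero, DualNumber.snd_mul, snd_add, snd_zero, fst_evalEps₂,
    fst_snd_evalEps₂ _ _ hkl, h0] at h
  have h2 : (2 : ZMod p) ≠ 0 := Ring.two_ne_zero (by rwa [ZMod.ringChar_zmod_n])
  refine (mul_eq_zero.mp ?_).resolve_left h2
  unfold coeffV
  linear_combination h

theorem coeffV_mul_add_coeffV_mul_eq_zero_of_not_adj {x y : GraphAlg p G} (hx : x * x = 0)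
    (hy : y * y = 0) (hxy : (p : GraphAlg p G) * (x * y) = 0) {k l : Fin n} (hkl : k ≠ l)
    (hnadj : ¬ G.Adj k l) : coeffV k x * coeffV l y + coeffV l x * coeffV k y = 0 := by
  have hq : p ^ 2 ∣ p ^ 3 := pow_dvd_pow p (by norm_num)
  have key : (p : ZMod (p ^ 2)) * ((evalEps hq k x).snd * (evalEps hq l y).snd +
      (evalEps hq l x).snd * (evalEps hq k y).snd) = 0 := by
    have h := congrArg (fun z => z.snd.snd)
      (congrArg (evalEps₂ (q := p ^ 2) dvd_rfl k l fun h => absurd h hnadj) hxy)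
    simp only [map_mul, map_natCast, map_zero, DualNumber.snd_mul, TrivSqZeroExt.fst_mul, snd_add,
      fst_add, snd_zero, fst_zero, fst_natCast, snd_natCast, fst_evalEps₂,
      fst_snd_evalEps₂ _ _ hkl] at h
    set χ := evalEps₂ (q := p ^ 2) dvd_rfl k l fun h => absurd h hnadj
    -- the constant terms are killed by `p`, because their squares vanish
    have hx0 := ZMod.natCast_mul_eq_zero_of_mul_self_eq_zero (fst_evalEps_mul_self hx hq k)
    have hy0 := ZMod.natCast_mul_eq_zero_of_mul_self_eq_zero (fst_evalEps_mul_self hy hq k)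
    linear_combination h - (χ y).snd.snd * hx0 - (χ x).snd.snd * hy0
  rw [← ZMod.castHom_eq_zero_iff_natCast_mul_eq_zero] at key
  simpa only [coeffV, map_add, map_mul, castHom_snd_evalEps] using key

variable {n₁ n₂ : ℕ} {Γ₁ : SimpleGraph (Fin n₁)} {Γ₂ : SimpleGraph (Fin n₂)}

theorem exists_coeffV_ne_zero (φ : GraphAlg p Γ₁ ≃+* GraphAlg p Γ₂) (j : Fin n₂) :
    ∃ i, coeffV j (φ (v p Γ₁ i)) ≠ 0 := by
  by_contra! h
  have := snd_eq_zero_of_forall_snd_v_eq_zero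
    ((evalEps (dvd_pow_self p three_ne_zero) j).comp φ.toRingHom) h (φ.symm (v p Γ₂ j))
  simp at this

theorem exists_injective_comap_le (hp : p ≠ 2) (φ : GraphAlg p Γ₁ ≃+* GraphAlg p Γ₂) :
    ∃ σ : Fin n₂ → Fin n₁, Function.Injective σ ∧ Γ₁.comap σ ≤ Γ₂ := by
  have hsq : ∀ i, φ (v p Γ₁ i) * φ (v p Γ₁ i) = 0 := fun i => by
    rw [← map_mul, v_mul_self, map_zero]
  have hrow : ∀ i j l, coeffV j (φ (v p Γ₁ i)) ≠ 0 → coeffV l (φ (v p Γ₁ i)) ≠ 0 → j = l :=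
    fun i j l hj hl => by
      by_contra hjl
      exact mul_ne_zero hj hl (coeffV_mul_coeffV_eq_zero hp (hsq i) hjl)
  choose σ hσ using exists_coeffV_ne_zero φ
  refine ⟨σ, fun j l h => hrow (σ j) j l (hσ j) (h ▸ hσ l), fun j l hadj => ?_⟩
  rw [SimpleGraph.comap_adj] at hadj
  have hjl : j ≠ l := by rintro rfl; exact hadj.ne rfl
  by_contra hnadj
  have h := coeffV_mul_add_coeffV_mul_eq_zero_of_not_adj (hsq (σ j)) (hsq (σ l))
    (by rw [← map_mul, ← map_natCast φ, ← map_mul, natCast_mul_v_mul_v_of_adj hadj, map_zero])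
    hjl hnadj
  have hl : coeffV l (φ (v p Γ₁ (σ j))) = 0 := by
    by_contra hl
    exact hjl (hrow _ _ _ (hσ j) hl)
  rw [hl, zero_mul, add_zero] at h
  exact mul_ne_zero (hσ j) (hσ l) h

end Coeff

end GraphAlg

theorem SimpleGraph.nonempty_iso_of_comap_le {V W : Type*} [Fintype V] [Fintype W]
    {G : SimpleGraph V} {H : SimpleGraph W} {f : W → V} {g : V → W} (hf : f.Injective)
    (hg : g.Injective) (hfG : G.comap f ≤ H) (hgH : H.comap g ≤ G) : Nonempty (G ≃g H) := by
  classical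
  have hcard : Fintype.card W = Fintype.card V :=
    le_antisymm (Fintype.card_le_of_injective f hf) (Fintype.card_le_of_injective g hg)
  let e : W ≃ V :=
    Equiv.ofBijective f ((Fintype.bijective_iff_injective_and_card f).mpr ⟨hf, hcard⟩)
  let e' : V ≃ W :=
    Equiv.ofBijective g ((Fintype.bijective_iff_injective_and_card g).mpr ⟨hg, hcard.symm⟩)
  have hHG : H.edgeFinset.card ≤ G.edgeFinset.card :=
    (Iso.comap e' H).card_edgeFinset_eq ▸ Finset.card_le_card (edgeFinset_mono hgH)
  have hcomap : G.comap e = H := edgeFinset_inj.mp <|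
    Finset.eq_of_subset_of_card_le (edgeFinset_mono hfG)
      (by rwa [(Iso.comap e G).card_edgeFinset_eq])
  exact ⟨(hcomap ▸ Iso.comap e G).symm⟩

/-- For an odd prime `p` and undirected loopless finite graphs `Γ₁`, `Γ₂`,
the graph-algebras `R(Γ₁)` and `R(Γ₂)` are isomorphic as `(ℤ/p³ℤ)`-algebras if and only if
the graphs `Γ₁` and `Γ₂` are isomorphic. -/
theorem GraphAlg.algEquiv_iff_graph_iso
    (p : ℕ) [Fact p.Prime] (hodd : p ≠ 2) {n₁ n₂ : ℕ}
    (Γ₁ : SimpleGraph (Fin n₁)) (Γ₂ : SimpleGraph (Fin n₂)) :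
    Nonempty (GraphAlg p Γ₁ ≃ₐ[ZMod (p ^ 3)] GraphAlg p Γ₂) ↔ Nonempty (Γ₁ ≃g Γ₂) := by
  refine ⟨fun ⟨φ⟩ => ?_, fun ⟨ι⟩ => ⟨GraphAlg.algEquivOfIso ι⟩⟩
  obtain ⟨σ, hσ, hσΓ⟩ := GraphAlg.exists_injective_comap_le hodd φ.toRingEquiv
  obtain ⟨τ, hτ, hτΓ⟩ := GraphAlg.exists_injective_comap_le hodd φ.symm.toRingEquiv
  exact SimpleGraph.nonempty_iso_of_comap_le hσ hτ hσΓ hτΓ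
end
end

section
/- Let G = (A,∘) and H = (B,·) be finite groups, each with at least 3 elements. Then G and H are isomorphic as groups if and only if the directed multigraphs Γ(G) and Γ(H) are isomorphic (as directed multigraphs, i.e., via an edge-multiplicity-preserving bijection of vertices). -/
noncomputable section

open scoped Classical

/-- Vertices of the directed multigraph `Γ(G)` of a group `G = (A,∘)`:
the elements of `A` together with all ordered triples from `A × A × A`. -/
abbrev GrVert (A : Type*) := A ⊕ (A × A × A)

/-- The multiplicity function of the directed multigraph `Γ(G)`:
for `u,v,w ∈ A` with `u∘v = w` there are edges `(u,(u,v,w))` and `((u,v,w),w)` of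
multiplicity 1 and an edge `(v,(u,v,w))` of multiplicity 2; for `u,v,w ∈ A` with
`u∘v ≠ w` there are edges `(u,(u,v,w))` and `(v,(u,v,w))`, each of multiplicity 1.
All other ordered pairs of vertices carry no edge (multiplicity 0). -/
def edgeMult {A : Type*} [Mul A] : GrVert A → GrVert A → ℕ
  | Sum.inl x, Sum.inr (u, v, w) =>
      (if x = u then 1 else 0) + (if x = v then (if u * v = w then 2 else 1) else 0)
  | Sum.inr (u, v, w), Sum.inl x => if u * v = w ∧ x = w then 1 else 0
  | _, _ => 0

/-- The degree of a vertex of `Γ(G)`: the number of incident edges (in either direction),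
counted with multiplicity. -/
def grDeg {A : Type*} [Mul A] [Fintype A] (x : GrVert A) : ℕ :=
  (∑ y : GrVert A, edgeMult x y) + ∑ y : GrVert A, edgeMult y x

section Aux

variable {A : Type*} [Mul A]

lemma edgeMult_inl_inr (x u v w : A) :
    edgeMult (Sum.inl x) (Sum.inr (u, v, w)) =
      (if x = u then 1 else 0) + (if x = v then (if u * v = w then 2 else 1) else 0) := rfl

lemma edgeMult_inr_inl (u v w x : A) :
    edgeMult (Sum.inr (u, v, w)) (Sum.inl x) = if u * v = w ∧ x = w then 1 else 0 := rfl

lemma edgeMult_inl_inl (x y : A) : edgeMult (Sum.inl x) (Sum.inl y : GrVert A) = 0 := rfl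

lemma edgeMult_inr_inr (t t' : A × A × A) :
    edgeMult (Sum.inr t : GrVert A) (Sum.inr t') = 0 := rfl

lemma edgeMult_inr_le_one (t : A × A × A) (y : GrVert A) :
    edgeMult (Sum.inr t) y ≤ 1 := by
  obtain ⟨u, v, w⟩ := t
  cases y with
  | inl x =>
      rw [edgeMult_inr_inl]
      split <;> simp
  | inr t' => rw [edgeMult_inr_inr]; exact Nat.zero_le _

/-- A vertex is an "element vertex" iff it has an outgoing edge of multiplicity ≥ 2. -/
def isElem (v : GrVert A) : Prop := ∃ y, 2 ≤ edgeMult v y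

lemma isElem_inl [Nontrivial A] (x : A) : isElem (Sum.inl x : GrVert A) := by
  obtain ⟨u, hu⟩ := exists_ne x
  refine ⟨Sum.inr (u, x, u * x), ?_⟩
  rw [edgeMult_inl_inr]
  simp [hu.symm]

lemma not_isElem_inr (t : A × A × A) : ¬ isElem (Sum.inr t : GrVert A) := by
  rintro ⟨y, hy⟩
  exact absurd (le_trans hy (edgeMult_inr_le_one t y)) (by norm_num)

end Aux

section Inv

variable {A B : Type*} [Mul A] [Mul B]
variable (f : GrVert A ≃ GrVert B)
variable (hf : ∀ x y : GrVert A, edgeMult (f x) (f y) = edgeMult x y)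

include hf in
lemma isElem_image_iff (v : GrVert A) : isElem (f v) ↔ isElem v := by
  constructor
  · rintro ⟨y, hy⟩
    refine ⟨f.symm y, ?_⟩
    have := hf v (f.symm y)
    rw [f.apply_symm_apply] at this
    omega
  · rintro ⟨y, hy⟩
    exact ⟨f y, by rw [hf]; exact hy⟩

include hf in
lemma image_inl [Nontrivial A] (x : A) : ∃ b : B, f (Sum.inl x) = Sum.inl b := by
  have h : isElem (f (Sum.inl x)) := (isElem_image_iff f hf _).2 (isElem_inl x)
  cases hfx : f (Sum.inl x) with
  | inl b => exact ⟨b, rfl⟩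
  | inr t => rw [hfx] at h; exact absurd h (not_isElem_inr t)

include hf in
lemma image_inr [Nontrivial B] (t : A × A × A) :
    ∃ t' : B × B × B, f (Sum.inr t) = Sum.inr t' := by
  have h : ¬ isElem (f (Sum.inr t)) := fun h =>
    not_isElem_inr t ((isElem_image_iff f hf _).1 h)
  cases hft : f (Sum.inr t) with
  | inl b => rw [hft] at h; exact absurd (isElem_inl b) h
  | inr t' => exact ⟨t', rfl⟩

end Inv

/-- **Statement 12.** Finite groups `G` and `H`, each with at least 3 elements, are isomorphic
as groups if and only if the directed multigraphs `Γ(G)` and `Γ(H)` are isomorphic, i.e. there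
is a bijection of vertices preserving the multiplicity of every directed edge. -/
theorem mulEquiv_iff_multigraph_iso
    {A B : Type*} [Group A] [Group B] [Finite A] [Finite B]
    (hA : 3 ≤ Nat.card A) (hB : 3 ≤ Nat.card B) :
    Nonempty (A ≃* B) ↔
      ∃ f : GrVert A ≃ GrVert B, ∀ x y : GrVert A, edgeMult (f x) (f y) = edgeMult x y := by
  have hAnt : Nontrivial A := Finite.one_lt_card_iff_nontrivial.mp (by omega)
  have hBnt : Nontrivial B := Finite.one_lt_card_iff_nontrivial.mp (by omega)
  constructor
  · rintro ⟨φ⟩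
    refine ⟨Equiv.sumCongr φ.toEquiv
      (Equiv.prodCongr φ.toEquiv (Equiv.prodCongr φ.toEquiv φ.toEquiv)), ?_⟩
    rintro (x | ⟨u, v, w⟩) (y | ⟨u', v', w'⟩)
    · rfl
    · simp only [Equiv.sumCongr_apply, Sum.map_inl, Sum.map_inr, Equiv.prodCongr_apply,
        Prod.map, MulEquiv.coe_toEquiv]
      rw [edgeMult_inl_inr, edgeMult_inl_inr]
      have key : φ u' * φ v' = φ w' ↔ u' * v' = w' := by
        rw [← map_mul]; exact φ.injective.eq_iff
      simp [key, φ.injective.eq_iff]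
    · simp only [Equiv.sumCongr_apply, Sum.map_inl, Sum.map_inr, Equiv.prodCongr_apply,
        Prod.map, MulEquiv.coe_toEquiv]
      rw [edgeMult_inr_inl, edgeMult_inr_inl]
      have key : φ u * φ v = φ w ↔ u * v = w := by
        rw [← map_mul]; exact φ.injective.eq_iff
      simp [key, φ.injective.eq_iff]
    · rfl
  · rintro ⟨f, hf⟩
    -- f.symm also preserves multiplicities
    have hf' : ∀ x y : GrVert B, edgeMult (f.symm x) (f.symm y) = edgeMult x y := by
      intro x y
      rw [← hf (f.symm x) (f.symm y), f.apply_symm_apply, f.apply_symm_apply]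
    -- the element-to-element map
    choose σ hσ using image_inl f hf (A := A) (B := B)
    choose τ hτ using image_inl f.symm hf' (A := B) (B := A)
    have hστ : ∀ b : B, σ (τ b) = b := by
      intro b
      have : f (Sum.inl (τ b)) = Sum.inl b := by rw [← hτ b, f.apply_symm_apply]
      have h2 := hσ (τ b)
      rw [this] at h2
      exact (Sum.inl.injEq _ _).mp h2.symm
    have hσinj : Function.Injective σ := by
      intro x y hxy
      have : f (Sum.inl x) = f (Sum.inl y) := by rw [hσ x, hσ y, hxy]
      exact Sum.inl_injective (f.injective this)
    have hσmul : ∀ u v : A, σ (u * v) = σ u * σ v := by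
      intro u v
      obtain ⟨⟨a, b, c⟩, habc⟩ := image_inr f hf (u, v, u * v)
      -- the outgoing edge of the good triple
      have h1 : edgeMult (Sum.inr (a, b, c) : GrVert B) (Sum.inl (σ (u * v))) = 1 := by
        rw [← habc, ← hσ, hf, edgeMult_inr_inl]
        simp
      rw [edgeMult_inr_inl] at h1
      have habc' : a * b = c ∧ σ (u * v) = c := by
        by_contra h
        rw [if_neg h] at h1
        exact absurd h1 one_ne_zero.symm
      obtain ⟨hab, hc⟩ := habc'
      -- σ v = b
      have h2 : edgeMult (Sum.inl (σ v)) (Sum.inr (a, b, c) : GrVert B) =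
          edgeMult (Sum.inl v) (Sum.inr (u, v, u * v) : GrVert A) := by
        rw [← habc, ← hσ, hf]
      rw [edgeMult_inl_inr, edgeMult_inl_inr, if_pos rfl, if_pos rfl, if_pos hab] at h2
      have hvb : σ v = b := by
        by_contra hne
        rw [if_neg hne] at h2
        split at h2 <;> omega
      -- σ u = a
      have h3 : edgeMult (Sum.inl (σ u)) (Sum.inr (a, b, c) : GrVert B) =
          edgeMult (Sum.inl u) (Sum.inr (u, v, u * v) : GrVert A) := by
        rw [← habc, ← hσ, hf]
      rw [edgeMult_inl_inr, edgeMult_inl_inr, if_pos rfl, if_pos rfl, if_pos hab] at h3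
      have hub : σ u = b ↔ u = v := by
        rw [← hvb]; exact ⟨fun h => hσinj h, fun h => by rw [h]⟩
      have hua : σ u = a := by
        by_contra hne
        rw [if_neg hne] at h3
        by_cases huv : u = v
        · rw [if_pos (hub.mpr huv), if_pos huv] at h3; omega
        · rw [if_neg (fun h => huv (hub.mp h)), if_neg huv] at h3; omega
      rw [hc, ← hab, hua, hvb]
    exact ⟨MulEquiv.mk' (Equiv.ofBijective σ ⟨hσinj, fun b => ⟨τ b, hστ b⟩⟩) hσmul⟩
end
end

section
/- Let G = (A,∘) be a finite group with |A| ≥ 3. In the directed multigraph Γ(G), every vertex u ∈ A has degree at least |A|², while every triple vertex (v,w,t) ∈ A×A×A has degree strictly smaller; hence d(u) > d((v,w,t)) for every u ∈ A and (v,w,t) ∈ A×A×A, and consequently every isomorphism of directed multigraphs from Γ(G) to Γ(H) (for H = (B,·) a finite group with |B| ≥ 3) maps A onto B and A×A×A onto B×B×B. -/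
noncomputable section

open scoped Classical

lemma grDeg_inl_eq {A : Type*} [Group A] [Fintype A] (x : A) :
    grDeg (Sum.inl x : GrVert A) =
      2 * Fintype.card A ^ 2 + 2 * Fintype.card A := by
  classical
  have hout : (∑ y : GrVert A, edgeMult (Sum.inl x) y)
      = 2 * Fintype.card A ^ 2 + Fintype.card A := by
    rw [Fintype.sum_sum_type]
    have h1 : (∑ a : A, edgeMult (Sum.inl x) (Sum.inl a)) = 0 := by
      simp [edgeMult]
    have h2 : (∑ t : A × A × A, edgeMult (Sum.inl x) (Sum.inr t))
        = 2 * Fintype.card A ^ 2 + Fintype.card A := by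
      have : (∑ t : A × A × A, edgeMult (Sum.inl x) (Sum.inr t))
          = ∑ u : A, ∑ v : A, ∑ w : A,
              ((if x = u then 1 else 0)
                + (if x = v then (if u * v = w then 2 else 1) else 0)) := by
        rw [Fintype.sum_prod_type]
        simp [Fintype.sum_prod_type, edgeMult]
      rw [this]
      have hA1 : ∀ u : A, ∑ v : A, ∑ w : A, (if x = u then (1:ℕ) else 0)
          = if x = u then Fintype.card A ^ 2 else 0 := by
        intro u
        by_cases h : x = u <;> simp [h, sq, Finset.card_univ, mul_comm]
      have hA2 : ∀ u : A, (∑ v : A, ∑ w : A,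
            (if x = v then (if u * v = w then (2:ℕ) else 1) else 0))
          = Fintype.card A + 1 := by
        intro u
        have : ∀ v : A, (∑ w : A, (if x = v then (if u * v = w then (2:ℕ) else 1) else 0))
            = if x = v then Fintype.card A + 1 else 0 := by
          intro v
          by_cases h : x = v
          · simp only [h, if_true]
            have : (∑ w : A, (if u * v = w then (2:ℕ) else 1))
                = ∑ w : A, ((if u * v = w then 1 else 0) + 1) := by
              apply Finset.sum_congr rfl
              intro w _
              by_cases hw : u * v = w <;> simp [hw]
            rw [this, Finset.sum_add_distrib]
            simp [Finset.card_univ, add_comm]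
          · simp [h]
        simp only [this]
        simp
      calc (∑ u : A, ∑ v : A, ∑ w : A,
              ((if x = u then (1:ℕ) else 0)
                + (if x = v then (if u * v = w then 2 else 1) else 0)))
          = ∑ u : A, ((∑ v : A, ∑ w : A, (if x = u then (1:ℕ) else 0))
              + ∑ v : A, ∑ w : A, (if x = v then (if u * v = w then (2:ℕ) else 1) else 0)) := by
            apply Finset.sum_congr rfl; intro u _
            rw [← Finset.sum_add_distrib]
            apply Finset.sum_congr rfl; intro v _
            rw [← Finset.sum_add_distrib]
        _ = ∑ u : A, ((if x = u then Fintype.card A ^ 2 else 0) + (Fintype.card A + 1)) := by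
            apply Finset.sum_congr rfl; intro u _
            rw [hA1 u, hA2 u]
        _ = 2 * Fintype.card A ^ 2 + Fintype.card A := by
            rw [Finset.sum_add_distrib]
            simp [Finset.card_univ]
            ring
    rw [h1, h2]; omega
  have hin : (∑ y : GrVert A, edgeMult y (Sum.inl x)) = Fintype.card A := by
    rw [Fintype.sum_sum_type]
    have h1 : (∑ a : A, edgeMult (Sum.inl a) (Sum.inl x)) = 0 := by
      simp [edgeMult]
    have h2 : (∑ t : A × A × A, edgeMult (Sum.inr t) (Sum.inl x)) = Fintype.card A := by
      have : (∑ t : A × A × A, edgeMult (Sum.inr t) (Sum.inl x))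
          = ∑ u : A, ∑ v : A, ∑ w : A, (if u * v = w ∧ x = w then (1:ℕ) else 0) := by
        rw [Fintype.sum_prod_type]
        refine Finset.sum_congr rfl fun u _ => ?_
        rw [Fintype.sum_prod_type]
        rfl
      rw [this]
      have hw : ∀ u v : A, (∑ w : A, (if u * v = w ∧ x = w then (1:ℕ) else 0))
          = if u * v = x then 1 else 0 := by
        intro u v
        have : ∀ w : A, (if u * v = w ∧ x = w then (1:ℕ) else 0)
            = if w = x then (if u * v = x then 1 else 0) else 0 := by
          intro w
          by_cases hwx : w = x
          · subst hwx; simp [and_comm, eq_comm]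
          · simp [hwx]
            intro h1 h2
            exact absurd h2.symm hwx
        simp only [this]
        simp
      simp only [hw]
      have hv : ∀ u : A, (∑ v : A, (if u * v = x then (1:ℕ) else 0)) = 1 := by
        intro u
        have : ∀ v : A, (u * v = x) ↔ (v = u⁻¹ * x) := by
          intro v; constructor
          · intro h; rw [← h]; group
          · intro h; rw [h]; group
        simp only [this]
        simp
      simp only [hv]
      simp [Finset.card_univ]
    rw [h1, h2]; omega
  rw [grDeg, hout, hin]; ring

lemma grDeg_inr_le {A : Type*} [Group A] [Fintype A] (t : A × A × A) :
    grDeg (Sum.inr t : GrVert A) ≤ 4 := by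
  classical
  obtain ⟨u, v, w⟩ := t
  have hout : (∑ y : GrVert A, edgeMult (Sum.inr (u,v,w) : GrVert A) y) ≤ 1 := by
    rw [Fintype.sum_sum_type]
    have h2 : (∑ s : A × A × A, edgeMult (Sum.inr (u,v,w) : GrVert A) (Sum.inr s)) = 0 := by
      simp [edgeMult]
    have h1 : (∑ a : A, edgeMult (Sum.inr (u,v,w) : GrVert A) (Sum.inl a)) ≤ 1 := by
      have : ∀ a : A, edgeMult (Sum.inr (u,v,w) : GrVert A) (Sum.inl a)
          = if a = w then (if u * v = w then 1 else 0) else 0 := by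
        intro a
        by_cases ha : a = w
        · subst ha; simp [edgeMult]
        · simp [edgeMult, ha]
      simp only [this]
      simp
      split <;> simp
    omega
  have hin : (∑ y : GrVert A, edgeMult y (Sum.inr (u,v,w) : GrVert A)) ≤ 3 := by
    rw [Fintype.sum_sum_type]
    have h2 : (∑ s : A × A × A, edgeMult (Sum.inr s) (Sum.inr (u,v,w) : GrVert A)) = 0 := by
      simp [edgeMult]
    have h1 : (∑ a : A, edgeMult (Sum.inl a) (Sum.inr (u,v,w) : GrVert A)) ≤ 3 := by
      have hle : ∀ a : A, edgeMult (Sum.inl a) (Sum.inr (u,v,w) : GrVert A)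
          ≤ (if a = u then 1 else 0) + (if a = v then 2 else 0) := by
        intro a
        simp only [edgeMult]
        by_cases h1 : a = u <;> by_cases h2 : a = v <;> split_ifs <;> simp_all
      calc (∑ a : A, edgeMult (Sum.inl a) (Sum.inr (u,v,w) : GrVert A))
          ≤ ∑ a : A, ((if a = u then 1 else 0) + (if a = v then 2 else 0)) :=
            Finset.sum_le_sum (fun a _ => hle a)
        _ = 3 := by rw [Finset.sum_add_distrib]; simp
    omega
  rw [grDeg]; omega

/-- **Statement 13.** In `Γ(G)` for a finite group `G = (A,∘)` with `|A| ≥ 3`, every vertex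
`u ∈ A` has degree at least `|A|²` while every triple vertex has strictly smaller degree;
consequently every isomorphism of directed multigraphs `Γ(G) → Γ(H)` maps `A` onto `B` and
`A×A×A` onto `B×B×B`. -/
theorem multigraph_degree_separation
    {A : Type*} [Group A] [Fintype A] (hA : 3 ≤ Fintype.card A) :
    (∀ u : A, Fintype.card A ^ 2 ≤ grDeg (Sum.inl u : GrVert A)) ∧
    (∀ (u : A) (t : A × A × A), grDeg (Sum.inr t : GrVert A) < grDeg (Sum.inl u : GrVert A)) ∧
    (∀ (B : Type*) [Group B] [Fintype B], 3 ≤ Fintype.card B →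
      ∀ f : GrVert A ≃ GrVert B,
        (∀ x y : GrVert A, edgeMult (f x) (f y) = edgeMult x y) →
        (∀ u : A, ∃ b : B, f (Sum.inl u) = Sum.inl b) ∧
        (∀ t : A × A × A, ∃ t' : B × B × B, f (Sum.inr t) = Sum.inr t')) := by
  classical
  have key1 : ∀ u : A, Fintype.card A ^ 2 ≤ grDeg (Sum.inl u : GrVert A) := by
    intro u
    rw [grDeg_inl_eq]
    nlinarith
  have key2 : ∀ (u : A) (t : A × A × A),
      grDeg (Sum.inr t : GrVert A) < grDeg (Sum.inl u : GrVert A) := by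
    intro u t
    have h1 := grDeg_inr_le t
    have h2 := grDeg_inl_eq (A := A) u
    nlinarith
  refine ⟨key1, key2, ?_⟩
  intro B _ _ hB f hf
  have hdeg : ∀ x : GrVert A, grDeg (f x) = grDeg x := by
    intro x
    unfold grDeg
    congr 1
    · rw [← Equiv.sum_comp f (fun y => edgeMult (f x) y)]
      exact Finset.sum_congr rfl (fun y _ => hf x y)
    · rw [← Equiv.sum_comp f (fun y => edgeMult y (f x))]
      exact Finset.sum_congr rfl (fun y _ => hf y x)
  constructor
  · intro u
    rcases hfu : f (Sum.inl u) with b | t'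
    · exact ⟨b, rfl⟩
    · exfalso
      have h1 := hdeg (Sum.inl u)
      rw [hfu] at h1
      have h2 := grDeg_inr_le (A := B) t'
      have h3 := grDeg_inl_eq (A := A) u
      nlinarith
  · intro t
    rcases hft : f (Sum.inr t) with b | t'
    · exfalso
      have h1 := hdeg (Sum.inr t)
      rw [hft] at h1
      have h2 := grDeg_inr_le (A := A) t
      have h3 := grDeg_inl_eq (A := B) b
      nlinarith
    · exact ⟨t', rfl⟩
end
end

section
/- Let G = (A,∘) and H = (B,·) be finite groups and let h: G → H be a group homomorphism. Then the map f defined by f(u) = h(u) for u ∈ A and f((u,v,w)) = (h(u),h(v),h(w)) for (u,v,w) ∈ A×A×A is a homomorphism of directed multigraphs from Γ(G) to Γ(H), i.e., for every directed edge e of Γ(G), f maps e to a directed edge of Γ(H) of multiplicity at least that of e. -/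
noncomputable section

open scoped Classical

/-- **Statement 14.** A group homomorphism `h : G → H` of finite groups extends, via
`f(u) = h(u)` and `f((u,v,w)) = (h(u),h(v),h(w))`, to a homomorphism of directed multigraphs
`Γ(G) → Γ(H)`: every directed edge of `Γ(G)` is mapped to a directed edge of `Γ(H)` of
multiplicity at least that of the original edge. -/
theorem multigraph_hom_of_monoidHom
    {A B : Type*} [Group A] [Group B] [Finite A] [Finite B] (h : A →* B) :
    ∀ x y : GrVert A, 0 < edgeMult x y →
      edgeMult x y ≤
        edgeMult (Sum.map h (fun t : A × A × A => (h t.1, h t.2.1, h t.2.2)) x)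
          (Sum.map h (fun t : A × A × A => (h t.1, h t.2.1, h t.2.2)) y) := by
  rintro (x | ⟨u, v, w⟩) (y | ⟨u, v, w⟩) hpos <;>
    simp only [edgeMult, Sum.map_inl, Sum.map_inr] at *
  · exact absurd hpos (by simp)
  · have h1 : x = u → h x = h u := fun e => by rw [e]
    have h2 : x = v → h x = h v := fun e => by rw [e]
    have h3 : u * v = w → h u * h v = h w := fun e => by rw [← map_mul, e]
    split_ifs at * <;> simp_all
  · have h3 : u * v = w → h u * h v = h w := fun e => by rw [← map_mul, e]
    have h4 : y = w → h y = h w := fun e => by rw [e]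
    split_ifs at * <;> simp_all
  · exact absurd hpos (by simp)
end
end

section
/- Let G = (A,∘) and H = (B,·) be finite groups with |A|, |B| ≥ 3, and suppose f is an isomorphism of directed multigraphs from Γ(G) to Γ(H). Then the restriction of f to A is a group isomorphism from G to H. -/
noncomputable section

open scoped Classical

lemma deg_inr {A : Type*} [Group A] [Fintype A] (u v w : A) :
    grDeg (Sum.inr (u,v,w) : GrVert A) = if u*v = w then 4 else 2 := by
  unfold grDeg
  rw [Fintype.sum_sum_type, Fintype.sum_sum_type]
  by_cases h : u*v = w <;>
    simp [edgeMult, h, Finset.sum_add_distrib, Finset.sum_ite_eq']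

lemma five_le_deg_inl {A : Type*} [Group A] [Fintype A]
    (hA : 3 ≤ Fintype.card A) (x : A) : 5 ≤ grDeg (Sum.inl x : GrVert A) := by
  have key : (Fintype.card A)^2
      ≤ ∑ t : A × A × A, edgeMult (Sum.inl x : GrVert A) (Sum.inr t) := by
    calc (Fintype.card A)^2
        = ∑ _t ∈ ({x} ×ˢ (Finset.univ ×ˢ Finset.univ) : Finset (A × A × A)), 1 := by
          simp [sq]
      _ ≤ ∑ t ∈ ({x} ×ˢ (Finset.univ ×ˢ Finset.univ) : Finset (A × A × A)),
            edgeMult (Sum.inl x : GrVert A) (Sum.inr t) := by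
          apply Finset.sum_le_sum
          rintro ⟨u, v, w⟩ ht
          simp only [Finset.mem_product, Finset.mem_singleton, Finset.mem_univ] at ht
          have hu : u = x := ht.1
          subst hu
          simp [edgeMult]
      _ ≤ ∑ t : A × A × A, edgeMult (Sum.inl x : GrVert A) (Sum.inr t) :=
          Finset.sum_le_sum_of_subset (Finset.subset_univ _)
  have h9 : 9 ≤ (Fintype.card A)^2 := by nlinarith
  calc 5 ≤ ∑ t : A × A × A, edgeMult (Sum.inl x : GrVert A) (Sum.inr t) := by omega
    _ ≤ grDeg (Sum.inl x : GrVert A) := by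
        unfold grDeg
        rw [Fintype.sum_sum_type]
        omega

/-- **Statement 15.** If `G` and `H` are finite groups with at least 3 elements and `f` is an
isomorphism of directed multigraphs from `Γ(G)` to `Γ(H)`, then the restriction of `f` to `A`
is a group isomorphism from `G` to `H`. -/
theorem multigraph_iso_restricts_to_mulEquiv
    {A B : Type*} [Group A] [Group B] [Finite A] [Finite B]
    (hA : 3 ≤ Nat.card A) (hB : 3 ≤ Nat.card B)
    (f : GrVert A ≃ GrVert B)
    (hf : ∀ x y : GrVert A, edgeMult (f x) (f y) = edgeMult x y) :
    ∃ e : A ≃* B, ∀ u : A, f (Sum.inl u) = Sum.inl (e u) := by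
  cases nonempty_fintype A
  cases nonempty_fintype B
  rw [Nat.card_eq_fintype_card] at hA hB
  have hf' : ∀ x y : GrVert B, edgeMult (f.symm x) (f.symm y) = edgeMult x y := by
    intro x y
    rw [← hf (f.symm x) (f.symm y), f.apply_symm_apply, f.apply_symm_apply]
  have hdeg : ∀ x : GrVert A, grDeg (f x) = grDeg x := by
    intro x
    unfold grDeg
    rw [← Equiv.sum_comp f (fun y => edgeMult (f x) y),
        ← Equiv.sum_comp f (fun y => edgeMult y (f x))]
    simp only [hf]
  have hdeg' : ∀ x : GrVert B, grDeg (f.symm x) = grDeg x := by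
    intro x
    unfold grDeg
    rw [← Equiv.sum_comp f.symm (fun y => edgeMult (f.symm x) y),
        ← Equiv.sum_comp f.symm (fun y => edgeMult y (f.symm x))]
    simp only [hf']
  have hmap : ∀ u : A, ∃ b : B, f (Sum.inl u) = Sum.inl b := by
    intro u
    rcases h : f (Sum.inl u) with b | ⟨p, q, r⟩
    · exact ⟨b, rfl⟩
    · exfalso
      have h1 := hdeg (Sum.inl u)
      rw [h, deg_inr] at h1
      have h2 := five_le_deg_inl hA u
      rw [← h1] at h2
      split_ifs at h2 <;> omega
  have hmapB : ∀ b : B, ∃ a : A, f.symm (Sum.inl b) = Sum.inl a := by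
    intro b
    rcases h : f.symm (Sum.inl b) with a | ⟨p, q, r⟩
    · exact ⟨a, rfl⟩
    · exfalso
      have h1 := hdeg' (Sum.inl b)
      rw [h, deg_inr] at h1
      have h2 := five_le_deg_inl hB b
      rw [← h1] at h2
      split_ifs at h2 <;> omega
  choose e he using hmap
  have einj : Function.Injective e := by
    intro a b hab
    have : f (Sum.inl a) = f (Sum.inl b) := by rw [he a, he b, hab]
    exact Sum.inl.inj (f.injective this)
  have esurj : Function.Surjective e := by
    intro b
    obtain ⟨a, ha⟩ := hmapB b
    refine ⟨a, ?_⟩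
    have h1 : f (Sum.inl a) = Sum.inl b := by rw [← ha, f.apply_symm_apply]
    rw [he a] at h1
    exact Sum.inl.inj h1
  have htr : ∀ u v : A, ∃ p : B × B × B, f (Sum.inr (u, v, u*v)) = Sum.inr p := by
    intro u v
    rcases h : f (Sum.inr (u, v, u*v)) with b | p
    · exfalso
      obtain ⟨a, rfl⟩ := esurj b
      have := f.injective (h.trans (he a).symm)
      simp at this
    · exact ⟨p, rfl⟩
  have hmul : ∀ u v : A, e (u * v) = e u * e v := by
    intro u v
    obtain ⟨⟨u', v', w'⟩, ht⟩ := htr u v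
    have hw : u' * v' = w' := by
      have h1 := hdeg (Sum.inr (u, v, u*v))
      rw [ht, deg_inr, deg_inr] at h1
      simp only [if_pos rfl] at h1
      split_ifs at h1 with h2
      · exact h2
      · omega
    have hw2 : e (u * v) = w' := by
      have h3 := hf (Sum.inr (u, v, u*v)) (Sum.inl (u*v))
      rw [ht, he (u*v)] at h3
      simp only [edgeMult] at h3
      simp only [hw, true_and, and_true, if_pos rfl] at h3
      simp only [if_true] at h3
      by_contra hn
      rw [if_neg hn] at h3
      omega
    have h4 := hf (Sum.inl v) (Sum.inr (u, v, u*v))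
    rw [ht, he v] at h4
    simp only [edgeMult, hw, if_pos rfl, true_and] at h4
    have h5 := hf (Sum.inl u) (Sum.inr (u, v, u*v))
    rw [ht, he u] at h5
    simp only [edgeMult, hw, if_pos rfl, true_and] at h5
    rw [hw2, ← hw]
    by_cases huv : u = v
    · subst huv
      -- h4 : (if e u = u' then 1 else 0) + (if e u = v' then 2 else 0?) = 1 + 2
      simp only [if_pos rfl] at h4
      split_ifs at h4 with ha hb hb <;> try omega
      rw [← ha, ← hb]
    · have hne : e u ≠ e v := fun h => huv (einj h)
      have hvu : ¬ (v = u) := fun h => huv h.symm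
      have huv' : ¬ (u = v) := huv
      rw [if_neg hvu] at h4
      rw [if_neg huv'] at h5
      simp only [if_true] at h4 h5
      split_ifs at h4 with ha hb hb <;> split_ifs at h5 with hc hd hd <;> try omega
      rw [← hb, ← hc]
  exact ⟨MulEquiv.mk' (Equiv.ofBijective e ⟨einj, esurj⟩) hmul, he⟩
end
end
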